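/- Let X be a real reflexive Banach space, f : X → ℝ fully Legendre with ∇f continuous, A : X → 2^{X*} maximally monotone, λ > 0, and suppose (∇f + λA)⁻¹ : X* → X is single-valued and continuous. Let U ⊆ X* be open with 0 ∈ U, and let Φ, Ψ : U × X* × X × X → ℝ be continuous. Fix x ∈ X, and for η ∈ U set ỹ(η) := (∇f + λA)⁻¹(λη + ∇f(x)), ξ̃(η) := η − (1/λ)(∇f(ỹ(η)) − ∇f(x)). If Φ(0, ξ̃(0), x, ỹ(0)) < Ψ(0, ξ̃(0), x, ỹ(0)), then there exists r > 0 such that every η ∈ X* with ‖η‖ < r lies in U and the triple (η, ỹ(η), ξ̃(η)) satisfies ξ̃(η) ∈ A(ỹ(η)), η = ξ̃(η) + (1/λ)(∇f(ỹ(η)) − ∇f(x)), and Φ(η, ξ̃(η), x, ỹ(η)) < Ψ(η, ξ̃(η), x, ỹ(η)); moreover (ỹ(η), ξ̃(η)) is the unique pair in X × X* satisfying the first two conditions. -/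

import Mathlib

/-- (Strongly implicit inexact resolvent inclusion problem.)
Let `X` be a real reflexive Banach space, `f : X → ℝ` fully Legendre (convex,
lower semicontinuous, Gâteaux differentiable with continuous gradient
`g = ∇f`, and with conjugate `fstar` Gâteaux differentiable on `X*`),
`A : X → 2^{X*}` maximally monotone, `λ > 0`, and suppose `(∇f + λA)⁻¹`
is single-valued and continuous (given by `R`, characterized by
`y = R w ↔ w ∈ ∇f(y) + λA(y)`). Let `U ⊆ X*` be open with `0 ∈ U` and
`Φ, Ψ` continuous. If `Φ(0, ξ̃(0), x, ỹ(0)) < Ψ(0, ξ̃(0), x, ỹ(0))`, then for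
some `r > 0`, every `η` with `‖η‖ < r` lies in `U`, the triple
`(η, ỹ(η), ξ̃(η))` solves the strongly implicit system, and `(ỹ(η), ξ̃(η))`
is the unique solution pair of the inclusion system. -/
theorem strongly_implicit_inexact_resolvent
    {X : Type*} [NormedAddCommGroup X] [NormedSpace ℝ X] [CompleteSpace X]
    (hrefl : Function.Surjective (NormedSpace.inclusionInDoubleDual ℝ X))
    (f : X → ℝ) (hconv : ConvexOn ℝ Set.univ f) (hlsc : LowerSemicontinuous f)
    (g : X → StrongDual ℝ X)
    (hg : ∀ x v, HasLineDerivAt ℝ f (g x v) x v)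
    (hgcont : Continuous g)
    (fstar : StrongDual ℝ X → ℝ)
    (hfstar : ∀ p, IsLUB (Set.range fun x => p x - f x) (fstar p))
    (gstar : StrongDual ℝ X → X)
    (hgstar : ∀ p q, HasLineDerivAt ℝ fstar (q (gstar p)) p q)
    (A : X → Set (StrongDual ℝ X))
    (hmono : ∀ x1 x2 u1 u2, u1 ∈ A x1 → u2 ∈ A x2 → 0 ≤ (u1 - u2) (x1 - x2))
    (hmax : ∀ y v, (∀ x u, u ∈ A x → 0 ≤ (v - u) (y - x)) → v ∈ A y)
    (lam : ℝ) (hlam : 0 < lam)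
    (R : StrongDual ℝ X → X)
    (hR : ∀ w y, (∃ a ∈ A y, w = g y + lam • a) ↔ y = R w)
    (hRcont : Continuous R)
    (U : Set (StrongDual ℝ X)) (hU : IsOpen U) (hU0 : (0 : StrongDual ℝ X) ∈ U)
    (Φ Ψ : StrongDual ℝ X × StrongDual ℝ X × X × X → ℝ)
    (hΦ : Continuous Φ) (hΨ : Continuous Ψ)
    (x : X)
    (ytil : StrongDual ℝ X → X) (hytil : ∀ η, ytil η = R (lam • η + g x))
    (xitil : StrongDual ℝ X → StrongDual ℝ X)
    (hxitil : ∀ η, xitil η = η - lam⁻¹ • (g (ytil η) - g x))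
    (hlt : Φ (0, xitil 0, x, ytil 0) < Ψ (0, xitil 0, x, ytil 0)) :
    ∃ r > 0, ∀ η : StrongDual ℝ X, ‖η‖ < r →
      η ∈ U ∧
      xitil η ∈ A (ytil η) ∧
      η = xitil η + lam⁻¹ • (g (ytil η) - g x) ∧
      Φ (η, xitil η, x, ytil η) < Ψ (η, xitil η, x, ytil η) ∧
      (∀ y ξ, ξ ∈ A y → η = ξ + lam⁻¹ • (g y - g x) →
        y = ytil η ∧ ξ = xitil η) := by
  have hlam0 : lam ≠ 0 := ne_of_gt hlam
  have hyc : Continuous ytil := by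
    have h1 : Continuous fun η : StrongDual ℝ X => R (lam • η + g x) :=
      hRcont.comp (by fun_prop)
    have : ytil = fun η => R (lam • η + g x) := funext hytil
    rw [this]; exact h1
  have hxic : Continuous xitil := by
    have h1 : Continuous fun η : StrongDual ℝ X =>
        η - lam⁻¹ • (g (ytil η) - g x) :=
      continuous_id.sub (((hgcont.comp hyc).sub continuous_const).const_smul lam⁻¹ :)
    have : xitil = fun η => η - lam⁻¹ • (g (ytil η) - g x) := funext hxitil
    rw [this]; exact h1
  -- the open set
  have hVopen : IsOpen {η : StrongDual ℝ X |
      Φ (η, xitil η, x, ytil η) < Ψ (η, xitil η, x, ytil η)} := by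
    have hm : Continuous fun η : StrongDual ℝ X => (η, xitil η, x, ytil η) :=
      continuous_id.prodMk (hxic.prodMk (continuous_const.prodMk hyc))
    exact isOpen_lt (hΦ.comp hm) (hΨ.comp hm)
  have h0V : (0 : StrongDual ℝ X) ∈ U ∩ {η |
      Φ (η, xitil η, x, ytil η) < Ψ (η, xitil η, x, ytil η)} := ⟨hU0, hlt⟩
  obtain ⟨r, hr, hball⟩ := Metric.isOpen_iff.mp (hU.inter hVopen) 0 h0V
  refine ⟨r, hr, fun η hη => ?_⟩
  have hηV := hball (by simpa [Metric.mem_ball] using hη)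
  have hmem : xitil η ∈ A (ytil η) := by
    obtain ⟨a, ha, hw⟩ := (hR (lam • η + g x) (ytil η)).mpr (hytil η)
    have haeq : a = xitil η := by
      rw [hxitil]
      have h2 : lam • a = lam • η + g x - g (ytil η) := by rw [hw]; abel
      have h3 := congrArg (fun v => lam⁻¹ • v) h2
      simp only [smul_smul, inv_mul_cancel₀ hlam0, one_smul, smul_sub, smul_add] at h3
      rw [h3]
      module
    rwa [haeq] at ha
  refine ⟨hηV.1, hmem, by rw [hxitil]; abel, hηV.2, fun y ξ hξ heq => ?_⟩
  have hy : y = ytil η := by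
    rw [hytil]
    apply (hR (lam • η + g x) y).mp
    refine ⟨ξ, hξ, ?_⟩
    rw [heq]
    rw [smul_add, smul_smul, mul_inv_cancel₀ hlam0, one_smul]
    abel
  refine ⟨hy, ?_⟩
  rw [hxitil, ← hy, heq]
  abel
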